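/- arXiv:1505.03314 — 2 statements merged into one kernel-verified Lean document; each statement's English description precedes it below -/
import Mathlib

section
/- The fourth power of the Probability integral admits the representation (∫₀^∞ e^{-x²} dx)⁴ = 24 · ∫₀¹ ∫₀¹ ∫₀¹ (∫₀^∞ δ³ · γ² · β · e^{-δ²·(1 + γ² + γ²·β² + γ²·β²·x²)} dδ) dγ dβ dx, and this common value equals π²/16. -/
open Real Set MeasureTheory

lemma aux_delta (a : ℝ) (ha : 0 < a) :
    ∫ δ in Ioi (0:ℝ), δ ^ 3 * Real.exp (-δ ^ 2 * a) = 1 / (2 * a ^ 2) := by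
  have hderiv : ∀ δ ∈ Ici (0:ℝ),
      HasDerivAt (fun δ : ℝ => -((a * δ ^ 2 + 1) * Real.exp (-δ ^ 2 * a)) / (2 * a ^ 2))
        (δ ^ 3 * Real.exp (-δ ^ 2 * a)) δ := by
    intro δ _
    have h1 : HasDerivAt (fun δ : ℝ => a * δ ^ 2 + 1) (a * (2 * δ)) δ := by
      simpa using ((hasDerivAt_pow 2 δ).const_mul a).add_const 1
    have h2 : HasDerivAt (fun δ : ℝ => -δ ^ 2 * a) (-(2 * δ) * a) δ := by
      simpa using ((hasDerivAt_pow 2 δ).neg.mul_const a)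
    have h3 := h2.exp
    have h4 := ((h1.mul h3).neg).div_const (2 * a ^ 2)
    refine h4.congr_deriv (Eq.symm ?_)
    field_simp
    ring
  have hpos : ∀ δ ∈ Ioi (0:ℝ), 0 ≤ δ ^ 3 * Real.exp (-δ ^ 2 * a) := by
    intro δ hδ
    have : (0:ℝ) < δ := hδ
    positivity
  have htend : Filter.Tendsto (fun δ : ℝ => -((a * δ ^ 2 + 1) * Real.exp (-δ ^ 2 * a)) / (2 * a ^ 2))
      Filter.atTop (nhds 0) := by
    have t0 : Filter.Tendsto (fun t : ℝ => (t + 1) * Real.exp (-t)) Filter.atTop (nhds 0) := by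
      have := (Real.tendsto_pow_mul_exp_neg_atTop_nhds_zero 1).add
        (Real.tendsto_exp_neg_atTop_nhds_zero)
      simpa [add_mul] using this
    have t2 : Filter.Tendsto (fun δ : ℝ => a * δ ^ 2) Filter.atTop Filter.atTop := by
      have : Filter.Tendsto (fun δ : ℝ => δ ^ 2) Filter.atTop Filter.atTop := by
        simpa [sq] using Filter.Tendsto.atTop_mul_atTop₀ (f := fun δ : ℝ => δ)
          (g := fun δ : ℝ => δ) Filter.tendsto_id Filter.tendsto_id
      exact this.const_mul_atTop ha
    have t3 := t0.comp t2
    have t4 : Filter.Tendsto (fun δ : ℝ => (a * δ ^ 2 + 1) * Real.exp (-δ ^ 2 * a))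
        Filter.atTop (nhds 0) := by
      refine t3.congr fun δ => ?_
      simp only [Function.comp]
      ring_nf
    have t5 := (t4.div_const (2 * a ^ 2)).neg
    simpa [neg_div] using t5
  have := integral_Ioi_of_hasDerivAt_of_nonneg' hderiv hpos htend
  rw [this]
  norm_num
  ring

lemma stage_delta (x β γ : ℝ) :
    ∫ δ in Ioi (0:ℝ), δ ^ 3 * γ ^ 2 * β *
        Real.exp (-δ ^ 2 * (1 + γ ^ 2 + γ ^ 2 * β ^ 2 + γ ^ 2 * β ^ 2 * x ^ 2))
      = γ ^ 2 * β / (2 * (1 + γ ^ 2 + γ ^ 2 * β ^ 2 + γ ^ 2 * β ^ 2 * x ^ 2) ^ 2) := by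
  set a := 1 + γ ^ 2 + γ ^ 2 * β ^ 2 + γ ^ 2 * β ^ 2 * x ^ 2 with ha'
  have ha : 0 < a := by positivity
  have : (∫ δ in Ioi (0:ℝ), δ ^ 3 * γ ^ 2 * β * Real.exp (-δ ^ 2 * a))
      = ∫ δ in Ioi (0:ℝ), (γ ^ 2 * β) * (δ ^ 3 * Real.exp (-δ ^ 2 * a)) := by
    congr 1; funext δ; ring
  rw [this, integral_const_mul, aux_delta a ha]
  ring

lemma stage_gamma (x β : ℝ) :
    ∫ γ in (0:ℝ)..1, γ ^ 2 * β / (2 * (1 + γ ^ 2 + γ ^ 2 * β ^ 2 + γ ^ 2 * β ^ 2 * x ^ 2) ^ 2)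
      = β * (Real.arctan (Real.sqrt (1 + β ^ 2 + β ^ 2 * x ^ 2)) / Real.sqrt (1 + β ^ 2 + β ^ 2 * x ^ 2)
          - 1 / (1 + (1 + β ^ 2 + β ^ 2 * x ^ 2))) / (4 * (1 + β ^ 2 + β ^ 2 * x ^ 2)) := by
  set c := 1 + β ^ 2 + β ^ 2 * x ^ 2 with hc'
  have hc : 0 < c := by positivity
  have hsc : 0 < Real.sqrt c := Real.sqrt_pos.2 hc
  have hsc2 : Real.sqrt c ^ 2 = c := Real.sq_sqrt hc.le
  -- rewrite integrand
  have hcongr : ∀ γ : ℝ, γ ^ 2 * β / (2 * (1 + γ ^ 2 + γ ^ 2 * β ^ 2 + γ ^ 2 * β ^ 2 * x ^ 2) ^ 2)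
      = γ ^ 2 * β / (2 * (1 + c * γ ^ 2) ^ 2) := by
    intro γ; rw [hc']; ring_nf
  rw [intervalIntegral.integral_congr (g := fun γ : ℝ => γ ^ 2 * β / (2 * (1 + c * γ ^ 2) ^ 2))
    (fun γ _ => hcongr γ)]
  have hderiv : ∀ γ ∈ uIcc (0:ℝ) 1,
      HasDerivAt (fun γ : ℝ => β * (Real.arctan (Real.sqrt c * γ) / Real.sqrt c
          - γ / (1 + c * γ ^ 2)) / (4 * c))
        (γ ^ 2 * β / (2 * (1 + c * γ ^ 2) ^ 2)) γ := by
    intro γ _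
    have hden : 0 < 1 + c * γ ^ 2 := by positivity
    have h1 : HasDerivAt (fun γ : ℝ => Real.sqrt c * γ) (Real.sqrt c) γ := by
      simpa using (hasDerivAt_id γ).const_mul (Real.sqrt c)
    have h2 := h1.arctan
    have h3 : HasDerivAt (fun γ : ℝ => 1 + c * γ ^ 2) (c * (2 * γ)) γ := by
      simpa using ((hasDerivAt_pow 2 γ).const_mul c).const_add 1
    have h4 := (hasDerivAt_id γ).div h3 (ne_of_gt hden)
    have h5 := (((h2.div_const (Real.sqrt c)).sub h4).const_mul β).div_const (4 * c)
    refine h5.congr_deriv (Eq.symm ?_)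
    rw [mul_pow, hsc2]
    simp only [id_eq]
    field_simp
    ring
  rw [intervalIntegral.integral_eq_sub_of_hasDerivAt hderiv (by
    apply Continuous.intervalIntegrable
    apply Continuous.div (by fun_prop) (by fun_prop)
    intro γ; positivity)]
  norm_num [Real.arctan_zero]

lemma stage_beta (x : ℝ) :
    ∫ β in (0:ℝ)..1, β * (Real.arctan (Real.sqrt (1 + β ^ 2 + β ^ 2 * x ^ 2)) / Real.sqrt (1 + β ^ 2 + β ^ 2 * x ^ 2)
          - 1 / (1 + (1 + β ^ 2 + β ^ 2 * x ^ 2))) / (4 * (1 + β ^ 2 + β ^ 2 * x ^ 2))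
      = (Real.pi / 4 - Real.arctan (Real.sqrt (2 + x ^ 2)) / Real.sqrt (2 + x ^ 2)) / (4 * (1 + x ^ 2)) := by
  have hderiv : ∀ β ∈ uIcc (0:ℝ) 1,
      HasDerivAt (fun b : ℝ => -(Real.arctan (Real.sqrt (1 + b ^ 2 + b ^ 2 * x ^ 2))
          / (4 * (1 + x ^ 2) * Real.sqrt (1 + b ^ 2 + b ^ 2 * x ^ 2))))
        (β * (Real.arctan (Real.sqrt (1 + β ^ 2 + β ^ 2 * x ^ 2)) / Real.sqrt (1 + β ^ 2 + β ^ 2 * x ^ 2)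
          - 1 / (1 + (1 + β ^ 2 + β ^ 2 * x ^ 2))) / (4 * (1 + β ^ 2 + β ^ 2 * x ^ 2))) β := by
    intro β _
    have hu0 : 0 < 1 + β ^ 2 + β ^ 2 * x ^ 2 := by positivity
    have hq0 : 0 < Real.sqrt (1 + β ^ 2 + β ^ 2 * x ^ 2) := Real.sqrt_pos.2 hu0
    have hq2 : Real.sqrt (1 + β ^ 2 + β ^ 2 * x ^ 2) ^ 2 = 1 + β ^ 2 + β ^ 2 * x ^ 2 :=
      Real.sq_sqrt hu0.le
    have hu : HasDerivAt (fun b : ℝ => 1 + b ^ 2 + b ^ 2 * x ^ 2) (2 * β + 2 * β * x ^ 2) β := by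
      simpa [Pi.add_def] using (((hasDerivAt_pow 2 β).const_add 1).add ((hasDerivAt_pow 2 β).mul_const (x ^ 2)))
    have hsq := hu.sqrt hu0.ne'
    have harc := hsq.arctan
    have hden := hsq.const_mul (4 * (1 + x ^ 2))
    have hdiv := (harc.div hden (by positivity)).neg
    refine hdiv.congr_deriv (Eq.symm ?_)
    set q := Real.sqrt (1 + β ^ 2 + β ^ 2 * x ^ 2) with hq
    rw [← hq2]
    have hx2 : (0:ℝ) < 1 + x ^ 2 := by positivity
    field_simp
    ring
  rw [intervalIntegral.integral_eq_sub_of_hasDerivAt hderiv (by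
    apply Continuous.intervalIntegrable
    have cE : Continuous (fun β : ℝ => 1 + β ^ 2 + β ^ 2 * x ^ 2) := by fun_prop
    have cq : Continuous (fun β : ℝ => Real.sqrt (1 + β ^ 2 + β ^ 2 * x ^ 2)) :=
      Real.continuous_sqrt.comp cE
    have hq0 : ∀ β : ℝ, Real.sqrt (1 + β ^ 2 + β ^ 2 * x ^ 2) ≠ 0 :=
      fun β => (Real.sqrt_pos.2 (by positivity)).ne'
    apply Continuous.div
    · apply Continuous.mul continuous_id
      apply Continuous.sub
      · exact Continuous.div (Real.continuous_arctan.comp cq) cq hq0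
      · exact Continuous.div continuous_const (by fun_prop) (fun β => by positivity)
    · fun_prop
    · intro β; positivity)]
  have e1 : (1 + (1:ℝ) ^ 2 + 1 ^ 2 * x ^ 2) = 2 + x ^ 2 := by norm_num
  have e0 : (1 + (0:ℝ) ^ 2 + 0 ^ 2 * x ^ 2) = 1 := by norm_num
  rw [e1, e0]
  rw [Real.sqrt_one, Real.arctan_one]
  have h2 : (0:ℝ) < Real.sqrt (2 + x ^ 2) := Real.sqrt_pos.2 (by positivity)
  have hx2 : (0:ℝ) < 1 + x ^ 2 := by positivity
  field_simp
  ring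

-- ∫_0^1 1/(w+y^2) dy = arctan(1/√w)/√w for w > 0
lemma aux_inv_quad (w : ℝ) (hw : 0 < w) :
    ∫ y in (0:ℝ)..1, 1 / (w + y ^ 2) = Real.arctan (1 / Real.sqrt w) / Real.sqrt w := by
  have hq0 : 0 < Real.sqrt w := Real.sqrt_pos.2 hw
  have hq2 : Real.sqrt w ^ 2 = w := Real.sq_sqrt hw.le
  have hderiv : ∀ y ∈ uIcc (0:ℝ) 1,
      HasDerivAt (fun y : ℝ => Real.arctan (y / Real.sqrt w) / Real.sqrt w)
        (1 / (w + y ^ 2)) y := by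
    intro y _
    have h1 : HasDerivAt (fun y : ℝ => y / Real.sqrt w) (1 / Real.sqrt w) y := by
      simpa using (hasDerivAt_id y).div_const (Real.sqrt w)
    have h2 := (h1.arctan).div_const (Real.sqrt w)
    refine h2.congr_deriv (Eq.symm ?_)
    field_simp
    linear_combination hq2
  rw [intervalIntegral.integral_eq_sub_of_hasDerivAt hderiv (by
    apply Continuous.intervalIntegrable
    exact Continuous.div continuous_const (by fun_prop) (fun y => by positivity))]
  norm_num

lemma arctan_inv_sqrt_three : Real.arctan (1 / Real.sqrt 3) = Real.pi / 6 := by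
  rw [← Real.tan_pi_div_six, Real.arctan_tan] <;> nlinarith [Real.pi_pos]

-- J = ∫_0^1 1/((1+x^2)√(2+x^2)) dx = π/6
lemma aux_J : ∫ x in (0:ℝ)..1, 1 / ((1 + x ^ 2) * Real.sqrt (2 + x ^ 2)) = Real.pi / 6 := by
  have hderiv : ∀ x ∈ uIcc (0:ℝ) 1,
      HasDerivAt (fun x : ℝ => Real.arctan (x / Real.sqrt (2 + x ^ 2)))
        (1 / ((1 + x ^ 2) * Real.sqrt (2 + x ^ 2))) x := by
    intro x _
    have hw : (0:ℝ) < 2 + x ^ 2 := by positivity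
    have hq0 : 0 < Real.sqrt (2 + x ^ 2) := Real.sqrt_pos.2 hw
    have hq2 : Real.sqrt (2 + x ^ 2) ^ 2 = 2 + x ^ 2 := Real.sq_sqrt hw.le
    have hu : HasDerivAt (fun x : ℝ => 2 + x ^ 2) (2 * x) x := by
      simpa using (hasDerivAt_pow 2 x).const_add 2
    have hsq := hu.sqrt hw.ne'
    have hdiv := ((hasDerivAt_id x).div hsq hq0.ne').arctan
    refine hdiv.congr_deriv (Eq.symm ?_)
    set q := Real.sqrt (2 + x ^ 2) with hqdef
    simp only [Pi.div_apply, id_eq]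
    field_simp
    ring_nf
    linear_combination (-x^2*q^2) * hq2
  rw [intervalIntegral.integral_eq_sub_of_hasDerivAt hderiv (by
    apply Continuous.intervalIntegrable
    refine Continuous.div continuous_const ?_ (fun x => by positivity)
    exact Continuous.mul (by fun_prop) (Real.continuous_sqrt.comp (by fun_prop)))]
  norm_num

lemma inner_g (x : ℝ) : ∫ y in (0:ℝ)..1, 1 / ((1 + x ^ 2) * (2 + x ^ 2 + y ^ 2))
    = Real.arctan (1 / Real.sqrt (2 + x ^ 2)) / ((1 + x ^ 2) * Real.sqrt (2 + x ^ 2)) := by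
  have key : ∀ y ∈ uIcc (0:ℝ) 1, (fun y : ℝ => 1 / ((1 + x ^ 2) * (2 + x ^ 2 + y ^ 2))) y
      = (fun y : ℝ => (1 / (1 + x ^ 2)) * (1 / (2 + x ^ 2 + y ^ 2))) y := by
    intro y _
    have h1 : (1 + x ^ 2) ≠ 0 := by positivity
    have h2 : (2 + x ^ 2 + y ^ 2) ≠ 0 := by positivity
    field_simp
  rw [intervalIntegral.integral_congr key, intervalIntegral.integral_const_mul,
    aux_inv_quad _ (by positivity : (0:ℝ) < 2 + x ^ 2)]
  have h1 : (1 + x ^ 2) ≠ 0 := by positivity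
  have h2 : Real.sqrt (2 + x ^ 2) ≠ 0 := (Real.sqrt_pos.2 (by positivity)).ne'
  field_simp

lemma inner_h (x : ℝ) : ∫ y in (0:ℝ)..1, 1 / ((1 + y ^ 2) * (2 + x ^ 2 + y ^ 2))
    = (Real.pi / 4 - Real.arctan (1 / Real.sqrt (2 + x ^ 2)) / Real.sqrt (2 + x ^ 2)) / (1 + x ^ 2) := by
  have key : ∀ y ∈ uIcc (0:ℝ) 1, (fun y : ℝ => 1 / ((1 + y ^ 2) * (2 + x ^ 2 + y ^ 2))) y
      = (fun y : ℝ => (1 / (1 + x ^ 2)) * (1 / (1 + y ^ 2) - 1 / (2 + x ^ 2 + y ^ 2))) y := by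
    intro y _
    have h1 : (1 + x ^ 2) ≠ 0 := by positivity
    have h2 : (2 + x ^ 2 + y ^ 2) ≠ 0 := by positivity
    have h3 : (1 + y ^ 2) ≠ 0 := by positivity
    field_simp
    ring
  rw [intervalIntegral.integral_congr key, intervalIntegral.integral_const_mul,
    intervalIntegral.integral_sub
      (by apply Continuous.intervalIntegrable
          exact Continuous.div continuous_const (by fun_prop) (fun y => by positivity))
      (by apply Continuous.intervalIntegrable
          exact Continuous.div continuous_const (by fun_prop) (fun y => by positivity)),
    aux_inv_quad _ (by positivity : (0:ℝ) < 2 + x ^ 2)]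
  rw [integral_one_div_one_add_sq, Real.arctan_one, Real.arctan_zero]
  ring

lemma aux_swap : (∫ x in (0:ℝ)..1, ∫ y in (0:ℝ)..1, 1 / ((1 + y ^ 2) * (2 + x ^ 2 + y ^ 2)))
    = ∫ x in (0:ℝ)..1, ∫ y in (0:ℝ)..1, 1 / ((1 + x ^ 2) * (2 + x ^ 2 + y ^ 2)) := by
  have hc : Continuous (fun p : ℝ × ℝ => 1 / ((1 + p.2 ^ 2) * (2 + p.1 ^ 2 + p.2 ^ 2))) :=
    Continuous.div continuous_const (by fun_prop) (fun p => by positivity)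
  have hInt : Integrable (Function.uncurry fun x y : ℝ => 1 / ((1 + y ^ 2) * (2 + x ^ 2 + y ^ 2)))
      ((volume.restrict (Ioc (0:ℝ) 1)).prod (volume.restrict (Ioc (0:ℝ) 1))) := by
    rw [Measure.prod_restrict, ← Measure.volume_eq_prod]
    exact ((hc.continuousOn.integrableOn_compact (isCompact_Icc.prod isCompact_Icc)).mono_set
      (Set.prod_mono Ioc_subset_Icc_self Ioc_subset_Icc_self))
  simp_rw [intervalIntegral.integral_of_le (zero_le_one : (0:ℝ) ≤ 1)]
  rw [MeasureTheory.integral_integral_swap hInt]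
  apply setIntegral_congr_fun measurableSet_Ioc
  intro a _
  apply setIntegral_congr_fun measurableSet_Ioc
  intro b _
  ring_nf

lemma cont_sqrt2 : Continuous (fun x : ℝ => Real.sqrt (2 + x ^ 2)) :=
  Real.continuous_sqrt.comp (by fun_prop)

lemma sqrt2_ne (x : ℝ) : Real.sqrt (2 + x ^ 2) ≠ 0 :=
  (Real.sqrt_pos.2 (by positivity)).ne'

lemma cont_Kint : Continuous
    (fun x : ℝ => Real.arctan (1 / Real.sqrt (2 + x ^ 2)) / ((1 + x ^ 2) * Real.sqrt (2 + x ^ 2))) := by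
  apply Continuous.div
  · exact Real.continuous_arctan.comp (Continuous.div continuous_const cont_sqrt2 sqrt2_ne)
  · exact Continuous.mul (by fun_prop) cont_sqrt2
  · intro x
    have h := Real.sqrt_pos.2 (show (0:ℝ) < 2 + x ^ 2 by positivity)
    positivity

lemma cont_Jint : Continuous (fun x : ℝ => 1 / ((1 + x ^ 2) * Real.sqrt (2 + x ^ 2))) := by
  apply Continuous.div continuous_const (Continuous.mul (by fun_prop) cont_sqrt2)
  intro x
  have h := Real.sqrt_pos.2 (show (0:ℝ) < 2 + x ^ 2 by positivity)
  simp only [Pi.mul_apply]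
  positivity

lemma aux_K : ∫ x in (0:ℝ)..1,
    Real.arctan (1 / Real.sqrt (2 + x ^ 2)) / ((1 + x ^ 2) * Real.sqrt (2 + x ^ 2))
    = Real.pi ^ 2 / 32 := by
  have key : (∫ x in (0:ℝ)..1,
      Real.arctan (1 / Real.sqrt (2 + x ^ 2)) / ((1 + x ^ 2) * Real.sqrt (2 + x ^ 2)))
      = Real.pi ^ 2 / 16 - ∫ x in (0:ℝ)..1,
        Real.arctan (1 / Real.sqrt (2 + x ^ 2)) / ((1 + x ^ 2) * Real.sqrt (2 + x ^ 2)) := by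
    calc (∫ x in (0:ℝ)..1,
        Real.arctan (1 / Real.sqrt (2 + x ^ 2)) / ((1 + x ^ 2) * Real.sqrt (2 + x ^ 2)))
        = ∫ x in (0:ℝ)..1, ∫ y in (0:ℝ)..1, 1 / ((1 + x ^ 2) * (2 + x ^ 2 + y ^ 2)) :=
          (intervalIntegral.integral_congr fun x _ => (inner_g x).symm)
      _ = ∫ x in (0:ℝ)..1, ∫ y in (0:ℝ)..1, 1 / ((1 + y ^ 2) * (2 + x ^ 2 + y ^ 2)) := aux_swap.symm
      _ = ∫ x in (0:ℝ)..1, (Real.pi / 4 - Real.arctan (1 / Real.sqrt (2 + x ^ 2)) / Real.sqrt (2 + x ^ 2)) / (1 + x ^ 2) :=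
          (intervalIntegral.integral_congr fun x _ => inner_h x)
      _ = ∫ x in (0:ℝ)..1, (Real.pi / 4 * (1 / (1 + x ^ 2)) -
            Real.arctan (1 / Real.sqrt (2 + x ^ 2)) / ((1 + x ^ 2) * Real.sqrt (2 + x ^ 2))) := by
          apply intervalIntegral.integral_congr
          intro x _
          have h1 : (1 + x ^ 2) ≠ 0 := by positivity
          have h2 := sqrt2_ne x
          field_simp
      _ = Real.pi ^ 2 / 16 - ∫ x in (0:ℝ)..1,
            Real.arctan (1 / Real.sqrt (2 + x ^ 2)) / ((1 + x ^ 2) * Real.sqrt (2 + x ^ 2)) := by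
          rw [intervalIntegral.integral_sub
            (by apply Continuous.intervalIntegrable
                exact continuous_const.mul (Continuous.div continuous_const (by fun_prop)
                  (fun x => by positivity)))
            (cont_Kint.intervalIntegrable _ _),
            intervalIntegral.integral_const_mul, integral_one_div_one_add_sq,
            Real.arctan_one, Real.arctan_zero]
          ring
  linarith [key]

lemma aux_ahmed : ∫ x in (0:ℝ)..1,
    Real.arctan (Real.sqrt (2 + x ^ 2)) / ((1 + x ^ 2) * Real.sqrt (2 + x ^ 2)) = 5 * Real.pi ^ 2 / 96 := by
  have key : ∀ x ∈ uIcc (0:ℝ) 1,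
      (fun x : ℝ => Real.arctan (Real.sqrt (2 + x ^ 2)) / ((1 + x ^ 2) * Real.sqrt (2 + x ^ 2))) x
      = (fun x : ℝ => Real.pi / 2 * (1 / ((1 + x ^ 2) * Real.sqrt (2 + x ^ 2))) -
          Real.arctan (1 / Real.sqrt (2 + x ^ 2)) / ((1 + x ^ 2) * Real.sqrt (2 + x ^ 2))) x := by
    intro x _
    have hq : 0 < Real.sqrt (2 + x ^ 2) := Real.sqrt_pos.2 (by positivity)
    have harc : Real.arctan (Real.sqrt (2 + x ^ 2)) =
        Real.pi / 2 - Real.arctan (1 / Real.sqrt (2 + x ^ 2)) := by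
      rw [one_div, Real.arctan_inv_of_pos hq]
      ring
    simp only [harc]
    have h1 : (1 + x ^ 2) ≠ 0 := by positivity
    field_simp
  rw [intervalIntegral.integral_congr key,
    intervalIntegral.integral_sub
      (by exact (continuous_const.mul cont_Jint).intervalIntegrable _ _)
      (cont_Kint.intervalIntegrable _ _),
    intervalIntegral.integral_const_mul, aux_J, aux_K]
  ring

lemma stage_x : ∫ x in (0:ℝ)..1,
    (Real.pi / 4 - Real.arctan (Real.sqrt (2 + x ^ 2)) / Real.sqrt (2 + x ^ 2)) / (4 * (1 + x ^ 2))
    = Real.pi ^ 2 / 384 := by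
  have key : ∀ x ∈ uIcc (0:ℝ) 1,
      (fun x : ℝ => (Real.pi / 4 - Real.arctan (Real.sqrt (2 + x ^ 2)) / Real.sqrt (2 + x ^ 2)) / (4 * (1 + x ^ 2))) x
      = (fun x : ℝ => Real.pi / 16 * (1 / (1 + x ^ 2)) -
          1 / 4 * (Real.arctan (Real.sqrt (2 + x ^ 2)) / ((1 + x ^ 2) * Real.sqrt (2 + x ^ 2)))) x := by
    intro x _
    have h1 : (1 + x ^ 2) ≠ 0 := by positivity
    have h2 := sqrt2_ne x
    field_simp
    ring
  have cont_A : Continuous (fun x : ℝ =>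
      Real.arctan (Real.sqrt (2 + x ^ 2)) / ((1 + x ^ 2) * Real.sqrt (2 + x ^ 2))) := by
    apply Continuous.div (Real.continuous_arctan.comp cont_sqrt2)
      (Continuous.mul (by fun_prop) cont_sqrt2)
    intro x
    have h := Real.sqrt_pos.2 (show (0:ℝ) < 2 + x ^ 2 by positivity)
    simp only [Pi.mul_apply]
    positivity
  rw [intervalIntegral.integral_congr key,
    intervalIntegral.integral_sub
      (by exact (continuous_const.mul (Continuous.div continuous_const (by fun_prop)
            (fun x => by positivity))).intervalIntegrable _ _)
      (by exact (continuous_const.mul cont_A).intervalIntegrable _ _),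
    intervalIntegral.integral_const_mul, intervalIntegral.integral_const_mul,
    integral_one_div_one_add_sq, Real.arctan_one, Real.arctan_zero, aux_ahmed]
  ring

theorem probability_integral_fourth_power :
    (∫ x in Set.Ioi (0:ℝ), Real.exp (-x ^ 2)) ^ 4
      = 24 * ∫ x in (0:ℝ)..1, ∫ β in (0:ℝ)..1, ∫ γ in (0:ℝ)..1,
          ∫ δ in Set.Ioi (0:ℝ),
            δ ^ 3 * γ ^ 2 * β *
              Real.exp (-δ ^ 2 * (1 + γ ^ 2 + γ ^ 2 * β ^ 2 + γ ^ 2 * β ^ 2 * x ^ 2))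
    ∧ (∫ x in Set.Ioi (0:ℝ), Real.exp (-x ^ 2)) ^ 4 = Real.pi ^ 2 / 16 := by
  have hI : (∫ x in Set.Ioi (0:ℝ), Real.exp (-x ^ 2)) = Real.sqrt Real.pi / 2 := by
    have := integral_gaussian_Ioi 1
    simpa using this
  have h4 : (Real.sqrt Real.pi / 2) ^ 4 = Real.pi ^ 2 / 16 := by
    rw [show (Real.sqrt Real.pi / 2) ^ 4 = (Real.sqrt Real.pi ^ 2) ^ 2 / 16 by ring,
      Real.sq_sqrt Real.pi_nonneg]
  constructor
  · rw [hI, h4]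
    simp only [stage_delta, stage_gamma, stage_beta, stage_x]
    ring
  · rw [hI, h4]
end

section
/- After integrating out β, the identity π²/16 = 6 · ∫₀¹ ∫₀¹ 1 / ((1 + γ²)(1 + x²)) dγ dx − 6 · ∫₀¹ ∫₀¹ 1 / ((1 + x²)(1 + γ²·(2 + x²))) dγ dx holds. -/
open Real Set MeasureTheory

-- basic antiderivative lemma: ∫ 1/(b+γ²)
lemma integral_one_div_b_add_sq (b : ℝ) (hb : 0 < b) :
    ∫ γ in (0:ℝ)..1, 1 / (b + γ ^ 2) = arctan (1 / Real.sqrt b) / Real.sqrt b := by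
  have hs : 0 < Real.sqrt b := Real.sqrt_pos.2 hb
  have hsq : Real.sqrt b ^ 2 = b := Real.sq_sqrt hb.le
  have hder : ∀ γ : ℝ, HasDerivAt (fun γ => arctan (γ / Real.sqrt b) / Real.sqrt b)
      (1 / (b + γ ^ 2)) γ := by
    intro γ
    have h1 : HasDerivAt (fun γ : ℝ => γ / Real.sqrt b) (1 / Real.sqrt b) γ := by
      simpa using (hasDerivAt_id γ).div_const (Real.sqrt b)
    have h2 := (Real.hasDerivAt_arctan (γ / Real.sqrt b)).comp γ h1
    have h3 := h2.div_const (Real.sqrt b)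
    refine h3.congr_deriv (Eq.symm ?_)
    field_simp
    ring_nf
    rw [hsq]
    ring
  rw [intervalIntegral.integral_eq_sub_of_hasDerivAt (fun γ _ => hder γ)]
  · simp
  · apply Continuous.intervalIntegrable
    exact continuous_const.div (by fun_prop) (fun γ => by positivity)

lemma integral_one_div_one_add_c_sq (c : ℝ) (hc : 0 < c) :
    ∫ γ in (0:ℝ)..1, 1 / (1 + γ ^ 2 * c) = arctan (Real.sqrt c) / Real.sqrt c := by
  have hs : 0 < Real.sqrt c := Real.sqrt_pos.2 hc
  have hsq : Real.sqrt c ^ 2 = c := Real.sq_sqrt hc.le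
  have hder : ∀ γ : ℝ, HasDerivAt (fun γ => arctan (γ * Real.sqrt c) / Real.sqrt c)
      (1 / (1 + γ ^ 2 * c)) γ := by
    intro γ
    have h1 : HasDerivAt (fun γ : ℝ => γ * Real.sqrt c) (Real.sqrt c) γ := by
      simpa using (hasDerivAt_id γ).mul_const (Real.sqrt c)
    have h3 := ((Real.hasDerivAt_arctan (γ * Real.sqrt c)).comp γ h1).div_const (Real.sqrt c)
    refine h3.congr_deriv (Eq.symm ?_)
    field_simp
    ring_nf
    rw [hsq]
  rw [intervalIntegral.integral_eq_sub_of_hasDerivAt (fun γ _ => hder γ)]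
  · simp
  · apply Continuous.intervalIntegrable
    exact continuous_const.div (by fun_prop) (fun γ => by positivity)

-- derivative of arctan (x / sqrt (2+x^2))
lemma hasDerivAt_u (x : ℝ) :
    HasDerivAt (fun x : ℝ => arctan (x / Real.sqrt (2 + x ^ 2)))
      (1 / ((1 + x ^ 2) * Real.sqrt (2 + x ^ 2))) x := by
  have h2x : (0:ℝ) < 2 + x ^ 2 := by positivity
  have hs : 0 < Real.sqrt (2 + x ^ 2) := Real.sqrt_pos.2 h2x
  have hsq : Real.sqrt (2 + x ^ 2) ^ 2 = 2 + x ^ 2 := Real.sq_sqrt h2x.le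
  have hq : HasDerivAt (fun x : ℝ => Real.sqrt (2 + x ^ 2))
      (x / Real.sqrt (2 + x ^ 2)) x := by
    have hp : HasDerivAt (fun x : ℝ => 2 + x ^ 2) (2 * x) x := by
      simpa using ((hasDerivAt_pow 2 x).const_add 2)
    have := (Real.hasDerivAt_sqrt h2x.ne').comp x hp
    refine this.congr_deriv (Eq.symm ?_)
    field_simp
  have hdiv : HasDerivAt (fun x : ℝ => x / Real.sqrt (2 + x ^ 2))
      ((1 * Real.sqrt (2 + x ^ 2) - x * (x / Real.sqrt (2 + x ^ 2))) /
        (Real.sqrt (2 + x ^ 2)) ^ 2) x :=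
    (hasDerivAt_id x).div hq hs.ne'
  have h3 := (Real.hasDerivAt_arctan (x / Real.sqrt (2 + x ^ 2))).comp x hdiv
  refine h3.congr_deriv (Eq.symm ?_)
  have h1x : (0:ℝ) < 1 + x ^ 2 := by positivity
  field_simp
  ring_nf
  rw [hsq]
  ring

lemma arctan_inv_sqrt_three_s7 : arctan (1 / Real.sqrt 3) = π / 6 := by
  rw [← Real.tan_pi_div_six, Real.arctan_tan] <;> linarith [Real.pi_pos]

lemma integral_I1 :
    ∫ x in (0:ℝ)..1, ∫ γ in (0:ℝ)..1, 1 / ((1 + γ ^ 2) * (1 + x ^ 2)) = π ^ 2 / 16 := by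
  have inner : ∀ x : ℝ, (∫ γ in (0:ℝ)..1, 1 / ((1 + γ ^ 2) * (1 + x ^ 2)))
      = (π / 4) * (1 / (1 + x ^ 2)) := by
    intro x
    have : ∀ γ : ℝ, 1 / ((1 + γ ^ 2) * (1 + x ^ 2)) = (1 / (1 + γ ^ 2)) * (1 / (1 + x ^ 2)) :=
      fun γ => by rw [one_div, mul_inv, one_div, one_div]
    simp only [this]
    rw [intervalIntegral.integral_mul_const, integral_one_div_one_add_sq]
    simp
  simp only [inner]
  rw [intervalIntegral.integral_const_mul, integral_one_div_one_add_sq]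
  simp
  ring

lemma cont_A : Continuous (fun x : ℝ => arctan (1 / Real.sqrt (2 + x ^ 2)) /
    ((1 + x ^ 2) * Real.sqrt (2 + x ^ 2))) := by
  apply Continuous.div
  · apply Real.continuous_arctan.comp
    apply Continuous.div continuous_const
    · exact (continuous_const.add (continuous_pow 2)).sqrt
    · intro x
      exact (Real.sqrt_pos.2 (by positivity)).ne'
  · exact (by fun_prop : Continuous fun x : ℝ => (1 + x ^ 2)).mul
      (continuous_const.add (continuous_pow 2)).sqrt
  · intro x
    have := Real.sqrt_pos.2 (show (0:ℝ) < 2 + x ^ 2 by positivity)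
    positivity

lemma E1 (x : ℝ) : (∫ γ in (0:ℝ)..1, 1 / ((1 + x ^ 2) * (2 + x ^ 2 + γ ^ 2)))
    = arctan (1 / Real.sqrt (2 + x ^ 2)) / ((1 + x ^ 2) * Real.sqrt (2 + x ^ 2)) := by
  have h2 : (0:ℝ) < 2 + x ^ 2 := by positivity
  have h1 : (0:ℝ) < 1 + x ^ 2 := by positivity
  have : ∀ γ : ℝ, 1 / ((1 + x ^ 2) * (2 + x ^ 2 + γ ^ 2))
      = (1 / (1 + x ^ 2)) * (1 / (2 + x ^ 2 + γ ^ 2)) :=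
    fun γ => by rw [one_div, mul_inv, one_div, one_div]
  simp only [this]
  rw [intervalIntegral.integral_const_mul, integral_one_div_b_add_sq _ h2]
  field_simp

lemma E2 (x : ℝ) : (∫ γ in (0:ℝ)..1, 1 / ((1 + γ ^ 2) * (2 + γ ^ 2 + x ^ 2)))
    = (π / 4) * (1 / (1 + x ^ 2))
      - arctan (1 / Real.sqrt (2 + x ^ 2)) / ((1 + x ^ 2) * Real.sqrt (2 + x ^ 2)) := by
  have h2 : (0:ℝ) < 2 + x ^ 2 := by positivity
  have h1 : (0:ℝ) < 1 + x ^ 2 := by positivity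
  have key : ∀ γ : ℝ, 1 / ((1 + γ ^ 2) * (2 + γ ^ 2 + x ^ 2))
      = (1 / (1 + x ^ 2)) * (1 / (1 + γ ^ 2) - 1 / (2 + x ^ 2 + γ ^ 2)) := by
    intro γ
    have hγ : (0:ℝ) < 1 + γ ^ 2 := by positivity
    have hd : (0:ℝ) < 2 + γ ^ 2 + x ^ 2 := by positivity
    have hd' : (0:ℝ) < 2 + x ^ 2 + γ ^ 2 := by positivity
    field_simp
    ring
  simp only [key]
  have i1 : IntervalIntegrable (fun γ : ℝ => 1 / (1 + γ ^ 2)) volume 0 1 :=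
    (continuous_const.div (by fun_prop) (fun γ => by positivity)).intervalIntegrable 0 1
  have i2 : IntervalIntegrable (fun γ : ℝ => 1 / (2 + x ^ 2 + γ ^ 2)) volume 0 1 :=
    (continuous_const.div (by fun_prop) (fun γ => by positivity)).intervalIntegrable 0 1
  rw [intervalIntegral.integral_const_mul, intervalIntegral.integral_sub i1 i2,
    integral_one_div_one_add_sq, integral_one_div_b_add_sq _ h2]
  simp
  field_simp

lemma fubini_swap :
    (∫ x in (0:ℝ)..1, ∫ γ in (0:ℝ)..1, 1 / ((1 + x ^ 2) * (2 + x ^ 2 + γ ^ 2)))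
      = ∫ x in (0:ℝ)..1, ∫ γ in (0:ℝ)..1, 1 / ((1 + γ ^ 2) * (2 + γ ^ 2 + x ^ 2)) := by
  have hcont : Continuous (fun p : ℝ × ℝ => 1 / ((1 + p.1 ^ 2) * (2 + p.1 ^ 2 + p.2 ^ 2))) :=
    continuous_const.div (by fun_prop) (fun p => by positivity)
  have hint : Integrable (Function.uncurry
      (fun x γ : ℝ => 1 / ((1 + x ^ 2) * (2 + x ^ 2 + γ ^ 2))))
      ((volume.restrict (Ioc (0:ℝ) 1)).prod (volume.restrict (Ioc (0:ℝ) 1))) := by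
    rw [Measure.prod_restrict]
    have : IntegrableOn (Function.uncurry
        (fun x γ : ℝ => 1 / ((1 + x ^ 2) * (2 + x ^ 2 + γ ^ 2))))
        (Icc (0:ℝ) 1 ×ˢ Icc (0:ℝ) 1) (volume.prod volume) := by
      rw [← Measure.volume_eq_prod]
      exact hcont.continuousOn.integrableOn_compact (isCompact_Icc.prod isCompact_Icc)
    exact this.mono_set (Set.prod_mono Ioc_subset_Icc_self Ioc_subset_Icc_self)
  simp only [intervalIntegral.integral_of_le (zero_le_one (α := ℝ))]
  exact MeasureTheory.integral_integral_swap hint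

lemma K_val : ∫ x in (0:ℝ)..1,
    arctan (1 / Real.sqrt (2 + x ^ 2)) / ((1 + x ^ 2) * Real.sqrt (2 + x ^ 2)) = π ^ 2 / 32 := by
  have h := fubini_swap
  simp only [E1, E2] at h
  have i1 : IntervalIntegrable (fun x : ℝ => (π / 4) * (1 / (1 + x ^ 2))) volume 0 1 :=
    (continuous_const.mul (continuous_const.div (by fun_prop)
      (fun x => by positivity))).intervalIntegrable 0 1
  have i2 : IntervalIntegrable (fun x : ℝ =>
      arctan (1 / Real.sqrt (2 + x ^ 2)) / ((1 + x ^ 2) * Real.sqrt (2 + x ^ 2))) volume 0 1 :=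
    cont_A.intervalIntegrable 0 1
  rw [intervalIntegral.integral_sub i1 i2, intervalIntegral.integral_const_mul,
    integral_one_div_one_add_sq] at h
  simp only [Real.arctan_one, Real.arctan_zero, sub_zero] at h
  linarith

lemma integral_inv_mul_sqrt :
    ∫ x in (0:ℝ)..1, 1 / ((1 + x ^ 2) * Real.sqrt (2 + x ^ 2)) = π / 6 := by
  rw [intervalIntegral.integral_eq_sub_of_hasDerivAt (fun x _ => hasDerivAt_u x)]
  · norm_num
  · apply Continuous.intervalIntegrable
    apply continuous_const.div
    · exact (by fun_prop : Continuous fun x : ℝ => (1 + x ^ 2)).mul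
        (continuous_const.add (continuous_pow 2)).sqrt
    · intro x
      have := Real.sqrt_pos.2 (show (0:ℝ) < 2 + x ^ 2 by positivity)
      positivity

lemma integral_I2 :
    ∫ x in (0:ℝ)..1, ∫ γ in (0:ℝ)..1, 1 / ((1 + x ^ 2) * (1 + γ ^ 2 * (2 + x ^ 2)))
      = 5 * π ^ 2 / 96 := by
  have inner : ∀ x : ℝ, (∫ γ in (0:ℝ)..1, 1 / ((1 + x ^ 2) * (1 + γ ^ 2 * (2 + x ^ 2))))
      = (π / 2) * (1 / ((1 + x ^ 2) * Real.sqrt (2 + x ^ 2)))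
        - arctan (1 / Real.sqrt (2 + x ^ 2)) / ((1 + x ^ 2) * Real.sqrt (2 + x ^ 2)) := by
    intro x
    have h2 : (0:ℝ) < 2 + x ^ 2 := by positivity
    have h1 : (0:ℝ) < 1 + x ^ 2 := by positivity
    have hs : 0 < Real.sqrt (2 + x ^ 2) := Real.sqrt_pos.2 h2
    have : ∀ γ : ℝ, 1 / ((1 + x ^ 2) * (1 + γ ^ 2 * (2 + x ^ 2)))
        = (1 / (1 + x ^ 2)) * (1 / (1 + γ ^ 2 * (2 + x ^ 2))) :=
      fun γ => by rw [one_div, mul_inv, one_div, one_div]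
    simp only [this]
    rw [intervalIntegral.integral_const_mul, integral_one_div_one_add_c_sq _ h2]
    have harc : arctan (Real.sqrt (2 + x ^ 2)) = π / 2 - arctan (1 / Real.sqrt (2 + x ^ 2)) := by
      rw [one_div, Real.arctan_inv_of_pos hs]
      ring
    rw [harc]
    field_simp
  simp only [inner]
  have i1 : IntervalIntegrable (fun x : ℝ =>
      (π / 2) * (1 / ((1 + x ^ 2) * Real.sqrt (2 + x ^ 2)))) volume 0 1 := by
    apply Continuous.intervalIntegrable
    apply continuous_const.mul
    apply continuous_const.div
    · exact (by fun_prop : Continuous fun x : ℝ => (1 + x ^ 2)).mul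
        (continuous_const.add (continuous_pow 2)).sqrt
    · intro x
      have := Real.sqrt_pos.2 (show (0:ℝ) < 2 + x ^ 2 by positivity)
      positivity
  rw [intervalIntegral.integral_sub i1 (cont_A.intervalIntegrable 0 1),
    intervalIntegral.integral_const_mul, integral_inv_mul_sqrt, K_val]
  ring

theorem after_beta_integration :
    Real.pi ^ 2 / 16
      = 6 * (∫ x in (0:ℝ)..1, ∫ γ in (0:ℝ)..1, 1 / ((1 + γ ^ 2) * (1 + x ^ 2)))
        - 6 * ∫ x in (0:ℝ)..1, ∫ γ in (0:ℝ)..1,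
            1 / ((1 + x ^ 2) * (1 + γ ^ 2 * (2 + x ^ 2))) := by
  rw [integral_I1, integral_I2]
  ring
end
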